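/- Let p be a prime, S ⊆ ℤ/pℤ, and F, R : S → ℤ/pℤ. Suppose that for all (n,ξ) ∈ (ℤ/pℤ)² with (n,ξ) ≠ (0,0), |∑_{y ∈ S} e_p(n F(y) + ξ R(y))| ≤ C p^{1/2}. Then for all f₀, f₁ : ℤ/pℤ → ℂ and all ξ ∈ ℤ/pℤ, (1/p²)∑_{x ∈ ℤ/pℤ, y ∈ S} f₀(x) f₁(x+F(y)) e_p(ξ R(y)) = 1_{ξ=0} · (|S|/p) · (𝔼_z f₀(z)) (𝔼_z f₁(z)) + E, with |E| ≤ C p^{-1/2} ‖f₀‖₂ ‖f₁‖₂. -/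

import Mathlib

open Finset

noncomputable def ep (p : ℕ) (x : ZMod p) : ℂ :=
  Complex.exp (2 * Real.pi * Complex.I * x.val / p)

noncomputable def ft (p : ℕ) [NeZero p] (f : ZMod p → ℂ) (ξ : ZMod p) : ℂ :=
  (1 / p) * ∑ x : ZMod p, f x * ep p (-(x * ξ))

noncomputable def L2 (p : ℕ) [NeZero p] (f : ZMod p → ℂ) : ℝ :=
  Real.sqrt ((1 / p) * ∑ x : ZMod p, ‖f x‖ ^ 2)
section helpers

variable (p : ℕ) [NeZero p]

lemma ep_eq_stdAddChar (x : ZMod p) : ep p x = ZMod.stdAddChar x := by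
  rw [ZMod.stdAddChar_apply, ZMod.toCircle_apply, ep]

lemma ep_add (a b : ZMod p) : ep p (a + b) = ep p a * ep p b := by
  simp only [ep_eq_stdAddChar]
  exact AddChar.map_add_eq_mul _ a b

lemma ep_zero : ep p (0 : ZMod p) = 1 := by
  simp only [ep_eq_stdAddChar]; exact AddChar.map_zero_eq_one _

lemma ep_abs (a : ZMod p) : ‖ep p a‖ = 1 := by
  have : (2 * (Real.pi : ℂ) * Complex.I * (a.val : ℂ) / p) =
      ((2 * Real.pi * a.val / p : ℝ) : ℂ) * Complex.I := by push_cast; ring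
  rw [ep, this, Complex.norm_exp_ofReal_mul_I]

lemma ep_ne_zero (a : ZMod p) : ep p a ≠ 0 := by
  intro h
  have := ep_abs p a
  rw [h] at this; simp at this

lemma ep_conj (a : ZMod p) : (starRingEnd ℂ) (ep p a) = ep p (-a) := by
  have h1 : ep p (-a) * ep p a = 1 := by rw [← ep_add, neg_add_cancel, ep_zero]
  have h2 : (starRingEnd ℂ) (ep p a) * ep p a = 1 := by
    rw [mul_comm, Complex.mul_conj, ← Complex.sq_norm, ep_abs]
    norm_num
  have := h1.trans h2.symm
  exact (mul_left_injective₀ (ep_ne_zero p a) this).symm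

lemma ep_orth (a : ZMod p) :
    ∑ x : ZMod p, ep p (a * x) = if a = 0 then (p : ℂ) else 0 := by
  simp only [ep_eq_stdAddChar]
  split_ifs with h
  · simp [h]
  · have := AddChar.sum_eq_zero_of_ne_one (ZMod.isPrimitive_stdAddChar p h)
    simpa only [AddChar.mulShift_apply] using this

end helpers

section helpers2
variable (p : ℕ) [NeZero p]

lemma hpC : (p : ℂ) ≠ 0 := Nat.cast_ne_zero.mpr (NeZero.ne p)

lemma ft_inversion (f : ZMod p → ℂ) (x : ZMod p) :
    ∑ n : ZMod p, ft p f n * ep p (x * n) = f x := by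
  have hp := hpC p
  have step : ∀ n : ZMod p, ft p f n * ep p (x * n)
      = ∑ z : ZMod p, (1/p : ℂ) * f z * ep p ((x - z) * n) := by
    intro n
    rw [ft, mul_assoc, Finset.sum_mul, Finset.mul_sum]
    refine Finset.sum_congr rfl fun z _ => ?_
    rw [mul_assoc (f z), ← ep_add]
    have h : -(z * n) + x * n = (x - z) * n := by ring
    rw [h, ← mul_assoc]
  calc ∑ n : ZMod p, ft p f n * ep p (x * n)
      = ∑ n : ZMod p, ∑ z : ZMod p, (1/p : ℂ) * f z * ep p ((x - z) * n) :=
        Finset.sum_congr rfl fun n _ => step n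
    _ = ∑ z : ZMod p, (1/p : ℂ) * f z * ∑ n : ZMod p, ep p ((x - z) * n) := by
        rw [Finset.sum_comm]; simp only [← Finset.mul_sum]
    _ = f x := by
        simp only [ep_orth, sub_eq_zero, mul_ite, mul_zero]
        rw [Finset.sum_ite_eq Finset.univ x]
        simp only [Finset.mem_univ, if_true]
        field_simp

lemma ft_conj (f : ZMod p → ℂ) (n : ZMod p) :
    (starRingEnd ℂ) (ft p f n) = (1/p : ℂ) * ∑ x : ZMod p, (starRingEnd ℂ) (f x) * ep p (x * n) := by
  rw [ft, map_mul, map_sum]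
  congr 1
  · simp
  · refine Finset.sum_congr rfl fun x _ => ?_
    rw [map_mul, ep_conj, neg_neg]

lemma parseval_c (f : ZMod p → ℂ) :
    ∑ n : ZMod p, ft p f n * (starRingEnd ℂ) (ft p f n)
      = (1/p : ℂ) * ∑ x : ZMod p, f x * (starRingEnd ℂ) (f x) := by
  calc ∑ n : ZMod p, ft p f n * (starRingEnd ℂ) (ft p f n)
      = ∑ n : ZMod p, ∑ x : ZMod p,
          (1/p : ℂ) * (starRingEnd ℂ) (f x) * (ft p f n * ep p (x * n)) := by
        refine Finset.sum_congr rfl fun n _ => ?_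
        rw [ft_conj, Finset.mul_sum, Finset.mul_sum]
        refine Finset.sum_congr rfl fun x _ => ?_
        ring
    _ = ∑ x : ZMod p, (1/p : ℂ) * (starRingEnd ℂ) (f x) * ∑ n : ZMod p, (ft p f n * ep p (x * n)) := by
        rw [Finset.sum_comm]; simp only [← Finset.mul_sum]
    _ = (1/p : ℂ) * ∑ x : ZMod p, f x * (starRingEnd ℂ) (f x) := by
        simp only [ft_inversion, Finset.mul_sum]
        refine Finset.sum_congr rfl fun x _ => ?_
        ring

lemma parseval (f : ZMod p → ℂ) :
    ∑ n : ZMod p, ‖ft p f n‖ ^ 2 = (1/p : ℝ) * ∑ x : ZMod p, ‖f x‖ ^ 2 := by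
  have h := parseval_c p f
  simp only [Complex.mul_conj, ← Complex.sq_norm, Complex.ofReal_pow] at h
  have key : ((∑ n : ZMod p, ‖ft p f n‖ ^ 2 : ℝ) : ℂ)
      = ((1/p : ℝ) * ∑ x : ZMod p, ‖f x‖ ^ 2 : ℂ) := by
    push_cast
    exact h
  exact_mod_cast key

lemma main_id (S : Finset (ZMod p)) (F R : ZMod p → ZMod p) (f₀ f₁ : ZMod p → ℂ) (ξ : ZMod p) :
    (1 / (p:ℂ) ^ 2) * (∑ x : ZMod p, ∑ y ∈ S, f₀ x * f₁ (x + F y) * ep p (ξ * R y))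
      = (1/p : ℂ) * ∑ n : ZMod p, ft p f₀ (-n) * ft p f₁ n *
          ∑ y ∈ S, ep p (n * F y + ξ * R y) := by
  have hp := hpC p
  have h0 : ∀ n : ZMod p, ∑ x : ZMod p, f₀ x * ep p (x * n) = (p:ℂ) * ft p f₀ (-n) := by
    intro n
    rw [ft, ← mul_assoc, mul_one_div, div_self hp, one_mul]
    simp only [mul_neg, neg_neg]
  have h1 : ∀ y : ZMod p, ∑ x : ZMod p, f₀ x * f₁ (x + F y)
      = ∑ n : ZMod p, (p:ℂ) * (ft p f₀ (-n) * ft p f₁ n * ep p (n * F y)) := by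
    intro y
    calc ∑ x : ZMod p, f₀ x * f₁ (x + F y)
        = ∑ x : ZMod p, ∑ n : ZMod p, f₀ x * ep p (x * n) * (ft p f₁ n * ep p (F y * n)) := by
          refine Finset.sum_congr rfl fun x _ => ?_
          rw [← ft_inversion p f₁ (x + F y), Finset.mul_sum]
          refine Finset.sum_congr rfl fun n _ => ?_
          rw [add_mul, ep_add]
          ring
      _ = ∑ n : ZMod p, (∑ x : ZMod p, f₀ x * ep p (x * n)) * (ft p f₁ n * ep p (F y * n)) := by
          rw [Finset.sum_comm]; simp only [← Finset.sum_mul]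
      _ = ∑ n : ZMod p, (p:ℂ) * (ft p f₀ (-n) * ft p f₁ n * ep p (n * F y)) := by
          refine Finset.sum_congr rfl fun n _ => ?_
          rw [h0 n, mul_comm (F y) n]
          ring
  calc (1 / (p:ℂ) ^ 2) * (∑ x : ZMod p, ∑ y ∈ S, f₀ x * f₁ (x + F y) * ep p (ξ * R y))
      = (1 / (p:ℂ) ^ 2) * ∑ y ∈ S, (∑ x : ZMod p, f₀ x * f₁ (x + F y)) * ep p (ξ * R y) := by
        rw [Finset.sum_comm]; simp only [← Finset.sum_mul]
    _ = (1 / (p:ℂ) ^ 2) * ∑ y ∈ S, ∑ n : ZMod p,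
          (p:ℂ) * (ft p f₀ (-n) * ft p f₁ n * ep p (n * F y + ξ * R y)) := by
        refine congrArg _ (Finset.sum_congr rfl fun y _ => ?_)
        rw [h1 y, Finset.sum_mul]
        refine Finset.sum_congr rfl fun n _ => ?_
        rw [ep_add]
        ring
    _ = (1/p : ℂ) * ∑ n : ZMod p, ft p f₀ (-n) * ft p f₁ n *
          ∑ y ∈ S, ep p (n * F y + ξ * R y) := by
        rw [Finset.sum_comm]
        simp only [Finset.mul_sum]
        refine Finset.sum_congr rfl fun n _ => ?_
        refine Finset.sum_congr rfl fun y _ => ?_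
        field_simp

end helpers2


set_option maxHeartbeats 1000000 in
theorem twisted_two_term_count (p : ℕ) [Fact p.Prime]
    (S : Finset (ZMod p)) (F R : ZMod p → ZMod p) (C : ℝ)
    (hexp : ∀ n ξ : ZMod p, ¬(n = 0 ∧ ξ = 0) →
      ‖∑ y ∈ S, ep p (n * F y + ξ * R y)‖ ≤ C * Real.sqrt p)
    (f₀ f₁ : ZMod p → ℂ) (ξ : ZMod p) :
    ‖(1 / p ^ 2) * (∑ x : ZMod p, ∑ y ∈ S, f₀ x * f₁ (x + F y) * ep p (ξ * R y)) -
        (if ξ = 0 then 1 else 0) * ((S.card : ℂ) / p) *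
          ((1 / p) * ∑ z : ZMod p, f₀ z) * ((1 / p) * ∑ z : ZMod p, f₁ z)‖ ≤
      C * (p : ℝ) ^ (-(1 : ℝ) / 2) * L2 p f₀ * L2 p f₁ := by
  haveI : NeZero p := ⟨(Fact.out : p.Prime).ne_zero⟩
  have hp0 : (0:ℝ) < p := Nat.cast_pos.mpr (Fact.out : p.Prime).pos
  have hs0 : (0:ℝ) < Real.sqrt p := Real.sqrt_pos.mpr hp0
  have hC : 0 ≤ C := by
    have h := hexp 1 0 (fun h => one_ne_zero h.1)
    have h0 : (0:ℝ) ≤ ‖∑ y ∈ S, ep p ((1:ZMod p) * F y + (0:ZMod p) * R y)‖ :=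
      norm_nonneg _
    nlinarith [h, h0, hs0]
  rw [main_id p S F R f₀ f₁ ξ]
  -- Cauchy–Schwarz + Parseval
  have hsum : ∑ n : ZMod p, ‖ft p f₀ (-n) * ft p f₁ n‖ ≤ L2 p f₀ * L2 p f₁ := by
    have hL0 : (0:ℝ) ≤ L2 p f₀ := Real.sqrt_nonneg _
    have hL1 : (0:ℝ) ≤ L2 p f₁ := Real.sqrt_nonneg _
    have hu : ∑ n : ZMod p, ‖ft p f₀ (-n)‖ ^ 2 = (L2 p f₀) ^ 2 := by
      have e1 : ∑ n : ZMod p, ‖ft p f₀ (-n)‖ ^ 2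
          = ∑ n : ZMod p, ‖ft p f₀ n‖ ^ 2 :=
        Fintype.sum_equiv (Equiv.neg _) _ _ (fun n => rfl)
      rw [e1, parseval, L2, Real.sq_sqrt (by positivity)]
    have hv : ∑ n : ZMod p, ‖ft p f₁ n‖ ^ 2 = (L2 p f₁) ^ 2 := by
      rw [parseval, L2, Real.sq_sqrt (by positivity)]
    have hnn : 0 ≤ ∑ n : ZMod p, ‖ft p f₀ (-n)‖ * ‖ft p f₁ n‖ :=
      Finset.sum_nonneg fun n _ =>
        mul_nonneg (norm_nonneg _) (norm_nonneg _)
    have cs := Finset.sum_mul_sq_le_sq_mul_sq Finset.univ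
      (fun n : ZMod p => ‖ft p f₀ (-n)‖) (fun n : ZMod p => ‖ft p f₁ n‖)
    have hle : ∑ n : ZMod p, ‖ft p f₀ (-n)‖ * ‖ft p f₁ n‖
        ≤ Real.sqrt ((∑ n : ZMod p, ‖ft p f₀ (-n)‖ ^ 2) *
            ∑ n : ZMod p, ‖ft p f₁ n‖ ^ 2) := by
      rw [← Real.sqrt_sq hnn]
      exact Real.sqrt_le_sqrt cs
    calc ∑ n : ZMod p, ‖ft p f₀ (-n) * ft p f₁ n‖
        = ∑ n : ZMod p, ‖ft p f₀ (-n)‖ * ‖ft p f₁ n‖ :=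
          Finset.sum_congr rfl fun n _ => norm_mul _ _
      _ ≤ Real.sqrt ((∑ n : ZMod p, ‖ft p f₀ (-n)‖ ^ 2) *
            ∑ n : ZMod p, ‖ft p f₁ n‖ ^ 2) := hle
      _ = L2 p f₀ * L2 p f₁ := by
          rw [hu, hv, Real.sqrt_mul (sq_nonneg _), Real.sqrt_sq hL0, Real.sqrt_sq hL1]
  have hrpow : (p:ℝ) ^ (-(1:ℝ)/2) = Real.sqrt p / p := by
    rw [show (-(1:ℝ)/2) = -(1/2:ℝ) by ring, Real.rpow_neg hp0.le, ← Real.sqrt_eq_rpow]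
    rw [eq_div_iff hp0.ne', inv_mul_eq_div, div_eq_iff hs0.ne']
    exact (Real.mul_self_sqrt hp0.le).symm
  have key : ∀ A : Finset (ZMod p),
      (∀ n ∈ A, ‖∑ y ∈ S, ep p (n * F y + ξ * R y)‖ ≤ C * Real.sqrt p) →
      ‖(1/(p:ℂ)) * ∑ n ∈ A,
          ft p f₀ (-n) * ft p f₁ n * ∑ y ∈ S, ep p (n * F y + ξ * R y)‖
        ≤ C * (p:ℝ) ^ (-(1:ℝ)/2) * L2 p f₀ * L2 p f₁ := by
    intro A hA
    have h1 : ‖(1/(p:ℂ)) * ∑ n ∈ A,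
          ft p f₀ (-n) * ft p f₁ n * ∑ y ∈ S, ep p (n * F y + ξ * R y)‖
        ≤ (1/(p:ℝ)) * ∑ n ∈ A,
            ‖ft p f₀ (-n) * ft p f₁ n‖ * (C * Real.sqrt p) := by
      rw [norm_mul]
      have he : ‖1/(p:ℂ)‖ = 1/(p:ℝ) := by
        rw [norm_div, norm_one, Complex.norm_natCast]
      rw [he]
      refine mul_le_mul_of_nonneg_left ?_ (by positivity)
      refine (norm_sum_le _ _).trans ?_
      refine Finset.sum_le_sum fun n hn => ?_
      rw [norm_mul]
      exact mul_le_mul_of_nonneg_left (hA n hn) (norm_nonneg _)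
    have h2 : ∑ n ∈ A, ‖ft p f₀ (-n) * ft p f₁ n‖ * (C * Real.sqrt p)
        ≤ ∑ n : ZMod p, ‖ft p f₀ (-n) * ft p f₁ n‖ * (C * Real.sqrt p) :=
      Finset.sum_le_sum_of_subset_of_nonneg (Finset.subset_univ A)
        (fun n _ _ => by positivity)
    have h3 : ∑ n : ZMod p, ‖ft p f₀ (-n) * ft p f₁ n‖ * (C * Real.sqrt p)
        = (C * Real.sqrt p) * ∑ n : ZMod p, ‖ft p f₀ (-n) * ft p f₁ n‖ := by
      rw [← Finset.sum_mul]; ring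
    calc ‖(1/(p:ℂ)) * ∑ n ∈ A,
          ft p f₀ (-n) * ft p f₁ n * ∑ y ∈ S, ep p (n * F y + ξ * R y)‖
        ≤ (1/(p:ℝ)) * ∑ n ∈ A,
            ‖ft p f₀ (-n) * ft p f₁ n‖ * (C * Real.sqrt p) := h1
      _ ≤ (1/(p:ℝ)) * ((C * Real.sqrt p) *
            ∑ n : ZMod p, ‖ft p f₀ (-n) * ft p f₁ n‖) := by
          rw [← h3]; exact mul_le_mul_of_nonneg_left h2 (by positivity)
      _ ≤ (1/(p:ℝ)) * ((C * Real.sqrt p) * (L2 p f₀ * L2 p f₁)) := by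
          refine mul_le_mul_of_nonneg_left ?_ (by positivity)
          exact mul_le_mul_of_nonneg_left hsum (by positivity)
      _ = C * (p:ℝ) ^ (-(1:ℝ)/2) * L2 p f₀ * L2 p f₁ := by
          rw [hrpow]; field_simp
  by_cases hξ : ξ = 0
  · subst hξ
    have hT0 : (∑ y ∈ S, ep p ((0:ZMod p) * F y + (0:ZMod p) * R y)) = (S.card : ℂ) := by
      simp [ep_zero]
    have ha0 : ft p f₀ (-(0:ZMod p)) * ft p f₁ 0
        = ((1/(p:ℂ)) * ∑ z : ZMod p, f₀ z) * ((1/(p:ℂ)) * ∑ z : ZMod p, f₁ z) := by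
      simp [ft, ep_zero]
    have hsplit : (1/(p:ℂ)) * (∑ n : ZMod p,
          ft p f₀ (-n) * ft p f₁ n * ∑ y ∈ S, ep p (n * F y + (0:ZMod p) * R y)) -
        (if (0:ZMod p) = 0 then (1:ℂ) else 0) * ((S.card:ℂ)/p) *
          ((1/(p:ℂ)) * ∑ z : ZMod p, f₀ z) * ((1/(p:ℂ)) * ∑ z : ZMod p, f₁ z)
        = (1/(p:ℂ)) * ∑ n ∈ Finset.univ.erase (0:ZMod p),
            ft p f₀ (-n) * ft p f₁ n * ∑ y ∈ S, ep p (n * F y + (0:ZMod p) * R y) := by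
      rw [if_pos rfl,
        ← Finset.add_sum_erase Finset.univ
          (fun n => ft p f₀ (-n) * ft p f₁ n * ∑ y ∈ S, ep p (n * F y + (0:ZMod p) * R y))
          (Finset.mem_univ (0:ZMod p)), hT0, ha0]
      ring
    rw [hsplit]
    refine key _ (fun n hn => ?_)
    have hn0 : n ≠ 0 := (Finset.mem_erase.mp hn).1
    exact hexp n 0 (fun h => hn0 h.1)
  · rw [if_neg hξ]
    simp only [zero_mul, sub_zero]
    exact key Finset.univ (fun n _ => hexp n ξ (fun h => hξ h.2))
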